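/- arXiv:1606.07715 — 5 statements merged into one kernel-verified Lean document; each statement's English description precedes it below -/
import Mathlib

section
/- Let I ⊆ [0,1] be a set of real numbers satisfying the DCC and let J₀ ⊆ [0,1] be a finite set of real numbers. Then the set I₁ = { i ∈ I : there exist positive integers k and m and an element f ∈ D(I) such that (m − 1 + f + k·i)/m ∈ J₀ } is a finite set. -/
/-- A set `S ⊆ ℝ` satisfies the descending chain condition (DCC) if every
non-increasing sequence of elements of `S` is eventually constant. -/
def SatisfiesDCC (S : Set ℝ) : Prop :=
  ∀ f : ℕ → ℝ, (∀ n, f n ∈ S) → Antitone f → ∃ N, ∀ m, N ≤ m → f m = f N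

/-- The derived set `D(I)` of a set `I ⊆ [0,1]`:
`D(I) = { (r − 1 + i_1 + … + i_p)/r : r ≥ 1, p ≥ 0, i_j ∈ I }`. -/
def paperDerivedSet (I : Set ℝ) : Set ℝ :=
  {x | ∃ (r p : ℕ), 0 < r ∧ ∃ i : Fin p → ℝ, (∀ j, i j ∈ I) ∧
    x = ((r : ℝ) - 1 + ∑ j, i j) / r}

open Pointwise

lemma dcc_isWF {S : Set ℝ} (h : SatisfiesDCC S) : S.IsWF := by
  rw [Set.isWF_iff_no_descending_seq]
  intro f hf hmem
  obtain ⟨N, hN⟩ := h f (fun n => hmem n) hf.antitone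
  exact absurd (hN (N + 1) (Nat.le_succ N)) (hf (Nat.lt_succ_self N)).ne

/-- `n`-fold sumset of `A`. -/
def iterSum (A : Set ℝ) : ℕ → Set ℝ
  | 0 => {0}
  | n + 1 => iterSum A n + A

lemma iterSum_isWF {A : Set ℝ} (hA : A.IsWF) : ∀ n, (iterSum A n).IsWF
  | 0 => Set.isWF_singleton
  | n + 1 => Set.IsWF.add (iterSum_isWF hA n) hA

lemma iterSum_succ_subset {A : Set ℝ} (h0 : (0 : ℝ) ∈ A) (n : ℕ) :
    iterSum A n ⊆ iterSum A (n + 1) := by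
  intro x hx
  have : x + 0 ∈ iterSum A n + A := Set.add_mem_add hx h0
  simpa [iterSum] using this

lemma iterSum_mono {A : Set ℝ} (h0 : (0 : ℝ) ∈ A) {n m : ℕ} (h : n ≤ m) :
    iterSum A n ⊆ iterSum A m := by
  induction h with
  | refl => exact subset_rfl
  | step _ ih => exact ih.trans (iterSum_succ_subset h0 _)

lemma sum_mem_iterSum {A : Set ℝ} {α : Type} [DecidableEq α] (t : Finset α) (f : α → ℝ)
    (hf : ∀ a ∈ t, f a ∈ A) : ∑ a ∈ t, f a ∈ iterSum A t.card := by
  induction t using Finset.induction_on with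
  | empty => simp [iterSum]
  | @insert a s ha ih =>
    rw [Finset.sum_insert ha, Finset.card_insert_of_notMem ha]
    have h1 : ∑ x ∈ s, f x ∈ iterSum A s.card :=
      ih fun x hx => hf x (Finset.mem_insert_of_mem hx)
    have h2 : f a ∈ A := hf a (Finset.mem_insert_self a s)
    have := Set.add_mem_add h1 h2
    simpa [iterSum, add_comm] using this

lemma sum_small_mem {I : Set ℝ} (hI : I ⊆ Set.Icc 0 1) {ε : ℝ} (hε : 0 < ε)
    (hεle : ∀ x ∈ I, x ≠ 0 → ε ≤ x) {p : ℕ} (f : Fin p → ℝ)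
    (hf : ∀ a, f a ∈ I) (hsum : ∑ a, f a ≤ 1) :
    ∑ a, f a ∈ iterSum (insert 0 I) ⌈ε⁻¹⌉₊ := by
  classical
  set A := Finset.univ.filter fun a => f a ≠ 0 with hA
  have hsum' : ∑ a, f a = ∑ a ∈ A, f a := by
    rw [hA, Finset.sum_filter_ne_zero]
  have hmem : ∀ a ∈ A, f a ∈ insert (0 : ℝ) I := fun a _ =>
    Set.mem_insert_iff.mpr (Or.inr (hf a))
  have hge : ∀ a ∈ A, ε ≤ f a := fun a ha =>
    hεle _ (hf a) (Finset.mem_filter.mp ha).2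
  have hnn : ∀ a ∈ A, (0 : ℝ) ≤ f a := fun a _ => (hI (hf a)).1
  have hcard : (A.card : ℝ) * ε ≤ ∑ a ∈ A, f a := by
    have := Finset.card_nsmul_le_sum A f ε hge
    simpa [nsmul_eq_mul] using this
  have h1 : (A.card : ℝ) * ε ≤ 1 := by
    rw [hsum'] at hsum; linarith
  have hcard' : A.card ≤ ⌈ε⁻¹⌉₊ := by
    have h2 : (A.card : ℝ) ≤ 1 / ε := (le_div_iff₀ hε).mpr h1
    rw [one_div] at h2
    exact_mod_cast h2.trans (Nat.le_ceil _)
  rw [hsum']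
  exact iterSum_mono (Set.mem_insert 0 I) hcard' (sum_mem_iterSum A f hmem)

lemma infinite_fiber_nat {U : Set ℝ} (hU : U.Infinite) (g : ℝ → ℕ) (B : ℕ)
    (hg : ∀ i ∈ U, g i ≤ B) : ∃ n, {i | i ∈ U ∧ g i = n}.Infinite := by
  by_contra h
  push_neg at h
  have hsub : U ⊆ ⋃ n ∈ Set.Iic B, {i | i ∈ U ∧ g i = n} := fun i hi =>
    Set.mem_biUnion (hg i hi) ⟨hi, rfl⟩
  exact hU (((Set.finite_Iic B).biUnion fun n _ => h n).subset hsub)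

lemma infinite_fiber_set {U : Set ℝ} (hU : U.Infinite) (g : ℝ → ℝ) {J : Set ℝ}
    (hJ : J.Finite) (hg : ∀ i ∈ U, g i ∈ J) :
    ∃ j ∈ J, {i | i ∈ U ∧ g i = j}.Infinite := by
  by_contra h
  push_neg at h
  have hsub : U ⊆ ⋃ j ∈ J, {i | i ∈ U ∧ g i = j} := fun i hi =>
    Set.mem_biUnion (hg i hi) ⟨hi, rfl⟩
  exact hU ((hJ.biUnion fun j hj => h j hj).subset hsub)

set_option maxHeartbeats 1000000 in
theorem stmt_0 (I : Set ℝ) (hI : I ⊆ Set.Icc 0 1) (hIdcc : SatisfiesDCC I)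
    (J₀ : Set ℝ) (hJ₀ : J₀ ⊆ Set.Icc 0 1) (hJ₀fin : J₀.Finite) :
    Set.Finite {i ∈ I | ∃ k m : ℕ, 0 < k ∧ 0 < m ∧ ∃ f ∈ paperDerivedSet I,
      ((m : ℝ) - 1 + f + k * i) / m ∈ J₀} := by
  by_contra hfin
  set T : Set ℝ := {i ∈ I | ∃ k m : ℕ, 0 < k ∧ 0 < m ∧ ∃ f ∈ paperDerivedSet I,
      ((m : ℝ) - 1 + f + k * i) / m ∈ J₀} with hTdef
  have hTinf : T.Infinite := hfin
  have hTI : T ⊆ I := fun i hi => hi.1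
  have hIwf : I.IsWF := dcc_isWF hIdcc
  set T' : Set ℝ := T \ {0} with hT'def
  have hT'inf : T'.Infinite := hTinf.diff (Set.finite_singleton 0)
  have hT'I : T' ⊆ I := fun i hi => hTI hi.1
  have hT'wf : T'.IsWF := hIwf.mono hT'I
  have hT'ne : T'.Nonempty := hT'inf.nonempty
  set δ := hT'wf.min hT'ne with hδdef
  have hδT' : δ ∈ T' := hT'wf.min_mem hT'ne
  have hδne : δ ≠ 0 := fun h => hδT'.2 (by simp [h])
  have hδ0 : 0 < δ := lt_of_le_of_ne (hI (hT'I hδT')).1 (Ne.symm hδne)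
  have hδle : ∀ i ∈ T', δ ≤ i := fun i hi => hT'wf.min_le hT'ne hi
  have hpos : ∀ i ∈ T', 0 < i := fun i hi => lt_of_lt_of_le hδ0 (hδle i hi)
  have hPne : (I ∩ Set.Ioi 0).Nonempty := ⟨δ, hT'I hδT', hδ0⟩
  have hPwf : (I ∩ Set.Ioi 0).IsWF := hIwf.mono Set.inter_subset_left
  set ε := hPwf.min hPne with hεdef
  have hε0 : 0 < ε := (hPwf.min_mem hPne).2
  have hεle : ∀ x ∈ I, x ≠ 0 → ε ≤ x := fun x hx hx0 =>
    hPwf.min_le hPne ⟨hx, lt_of_le_of_ne (hI hx).1 (Ne.symm hx0)⟩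
  set N := ⌈ε⁻¹⌉₊ with hNdef
  set W := iterSum (insert 0 I) N with hWdef
  have hWwf : W.IsWF := iterSum_isWF (hIwf.insert 0) N
  set Na := ⌈δ⁻¹⌉₊ with hNadef
  -- key per-element fact
  have key : ∀ i ∈ T', ∃ (j σ : ℝ) (a q : ℕ), j ∈ J₀ ∧ 1 ≤ a ∧ a ≤ Na ∧
      q ≤ ⌈(1 - j)⁻¹⌉₊ ∧ σ = 1 - q * (1 - j) ∧ σ - a * i ∈ W := by
    intro i hi
    obtain ⟨_, k, m, hk, hm, f, hfD, hjmem⟩ := hi.1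
    obtain ⟨r, p, hr, iv, hiv, hf⟩ := hfD
    set j : ℝ := ((m : ℝ) - 1 + f + k * i) / m with hjdef
    set s : ℝ := ∑ a, iv a with hsdef
    have hi0 : 0 < i := hpos i hi
    have hm0 : (0 : ℝ) < m := by exact_mod_cast hm
    have hr0 : (0 : ℝ) < r := by exact_mod_cast hr
    have hk1 : (1 : ℝ) ≤ k := by exact_mod_cast hk
    have hr1 : (1 : ℝ) ≤ r := by exact_mod_cast hr
    have hs0 : 0 ≤ s := Finset.sum_nonneg fun a _ => (hI (hiv a)).1
    have hj1 : j ≤ 1 := (hJ₀ hjmem).2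
    have eq1 : f * r = r - 1 + s := by
      rw [hf]; field_simp
    have eq2 : j * m = m - 1 + f + k * i := by
      rw [hjdef]; field_simp
    set a := r * k with hadef
    set q := m * r with hqdef
    have ha1 : 1 ≤ a := Nat.one_le_iff_ne_zero.mpr (Nat.mul_pos hr hk).ne'
    have hac : (1 : ℝ) ≤ (a : ℝ) := by exact_mod_cast ha1
    have hq0 : (0 : ℝ) < q := by exact_mod_cast Nat.mul_pos hm hr
    have key0 : s + (a : ℝ) * i = 1 - (q : ℝ) * (1 - j) := by
      push_cast [hadef, hqdef]
      linear_combination (-1 : ℝ) * eq1 - (r : ℝ) * eq2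
    have hδi : δ ≤ i := hδle i hi
    have hq1j : 0 ≤ (q : ℝ) * (1 - j) := mul_nonneg hq0.le (by linarith)
    have hai : (a : ℝ) * i ≤ 1 := by nlinarith
    have haNa : a ≤ Na := by
      have h1 : (a : ℝ) * δ ≤ 1 := by nlinarith
      have h2 : (a : ℝ) ≤ 1 / δ := (le_div_iff₀ hδ0).mpr h1
      rw [one_div] at h2
      rw [hNadef]
      exact_mod_cast h2.trans (Nat.le_ceil _)
    have hsW : ∀ σ : ℝ, σ - (a : ℝ) * i = s → σ - a * i ∈ W := by
      intro σ hσ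
      rw [hσ, hsdef]
      exact sum_small_mem hI hε0 hεle iv hiv (by rw [← hsdef]; nlinarith)
    by_cases hjone : j = 1
    · refine ⟨j, 1 - ((0 : ℕ) : ℝ) * (1 - j), a, 0, hjmem, ha1, haNa, Nat.zero_le _, rfl, ?_⟩
      refine hsW _ ?_
      rw [hjone] at key0 ⊢
      push_cast
      linarith
    · have hjlt : j < 1 := lt_of_le_of_ne hj1 hjone
      have hqb : (q : ℝ) * (1 - j) ≤ 1 := by nlinarith
      have hqle : q ≤ ⌈(1 - j)⁻¹⌉₊ := by
        have h2 : (q : ℝ) ≤ 1 / (1 - j) := (le_div_iff₀ (by linarith)).mpr hqb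
        rw [one_div] at h2
        exact_mod_cast h2.trans (Nat.le_ceil _)
      refine ⟨j, 1 - (q : ℝ) * (1 - j), a, q, hjmem, ha1, haNa, hqle, rfl, ?_⟩
      exact hsW _ (by linarith)
  -- skolemize
  have key' : ∀ i : ℝ, ∃ (j σ : ℝ) (a q : ℕ), i ∈ T' → (j ∈ J₀ ∧ 1 ≤ a ∧ a ≤ Na ∧
      q ≤ ⌈(1 - j)⁻¹⌉₊ ∧ σ = 1 - q * (1 - j) ∧ σ - a * i ∈ W) := by
    intro i
    by_cases hi : i ∈ T'
    · obtain ⟨j, σ, a, q, h⟩ := key i hi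
      exact ⟨j, σ, a, q, fun _ => h⟩
    · exact ⟨0, 0, 0, 0, fun h => absurd h hi⟩
  choose jF σF aF qF hKey using key'
  obtain ⟨j, hjJ, hU₁⟩ := infinite_fiber_set hT'inf jF hJ₀fin (fun i hi => (hKey i hi).1)
  set U₁ : Set ℝ := {i | i ∈ T' ∧ jF i = j} with hU₁def
  obtain ⟨a, hU₂⟩ := infinite_fiber_nat hU₁ aF Na (fun i hi => (hKey i hi.1).2.2.1)
  set U₂ : Set ℝ := {i | i ∈ U₁ ∧ aF i = a} with hU₂def
  have ha1 : 1 ≤ a := by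
    obtain ⟨i₀, hi₀⟩ := hU₂.nonempty
    rw [← hi₀.2]
    exact (hKey i₀ hi₀.1.1).2.1
  obtain ⟨q, hU₃⟩ := infinite_fiber_nat hU₂ qF ⌈(1 - j)⁻¹⌉₊ (fun i hi => by
    have := (hKey i hi.1.1).2.2.2.1
    rwa [hi.1.2] at this)
  set U₃ : Set ℝ := {i | i ∈ U₂ ∧ qF i = q} with hU₃def
  set c : ℝ := 1 - (q : ℝ) * (1 - j) with hcdef
  have hc : ∀ i ∈ U₃, c - (a : ℝ) * i ∈ W := by
    intro i hi
    have h := hKey i hi.1.1.1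
    have hσ : σF i = c := by
      rw [hcdef, ← hi.2, ← hi.1.1.2]
      exact h.2.2.2.2.1
    have := h.2.2.2.2.2
    rwa [hσ, hi.1.2] at this
  have hU₃I : U₃ ⊆ I := fun i hi => hT'I hi.1.1.1
  set e : ℕ ↪ ↥U₃ := Set.Infinite.natEmbedding U₃ hU₃ with hedef
  set w : ℕ → ℝ := fun n => ((e n : ↥U₃) : ℝ) with hwdef
  have hw : ∀ n, w n ∈ U₃ := fun n => (e n).2
  have hwinj : Function.Injective w :=
    Subtype.coe_injective.comp e.injective
  obtain ⟨g, hg⟩ := (Set.isPWO_iff_isWF.mpr hIwf).exists_monotone_subseq (f := w)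
    (fun n => hU₃I (hw n))
  have hsm : StrictMono (w ∘ g) := hg.strictMono_of_injective (hwinj.comp g.injective)
  have ha0 : (0 : ℝ) < a := by exact_mod_cast ha1
  have hanti : StrictAnti fun n => c - (a : ℝ) * w (g n) := by
    intro x y hxy
    have h1 : w (g x) < w (g y) := hsm hxy
    have h2 : (a : ℝ) * w (g x) < (a : ℝ) * w (g y) := (mul_lt_mul_iff_right₀ ha0).mpr h1
    show c - (a : ℝ) * w (g y) < c - (a : ℝ) * w (g x)
    linarith
  rw [Set.isWF_iff_no_descending_seq] at hWwf
  exact hWwf _ hanti (fun n => hc _ (hw (g n)))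
end

section
/- Let I ⊆ [0,1] be a set of real numbers. Then I satisfies the DCC if and only if D(I) ∩ [0,1] satisfies the DCC. -/
open Pointwise

lemma dcc_iff_isWF (S : Set ℝ) : SatisfiesDCC S ↔ S.IsWF := by
  constructor
  · intro h
    rw [Set.isWF_iff_no_descending_seq]
    intro f hf hmem
    obtain ⟨N, hN⟩ := h f hmem hf.antitone
    have := hf (Nat.lt_succ_self N)
    rw [hN (N+1) (Nat.le_succ N)] at this
    exact lt_irrefl _ this
  · intro h f hmem hf
    have hsub : Set.range f ⊆ S := by rintro x ⟨n, rfl⟩; exact hmem n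
    have hwf : (Set.range f).IsWF := h.mono hsub
    have hne : (Set.range f).Nonempty := ⟨f 0, 0, rfl⟩
    obtain ⟨N, hN⟩ := hwf.min_mem hne
    refine ⟨N, fun m hm => ?_⟩
    have h1 : f m ≤ f N := hf hm
    have h2 : hwf.min hne ≤ f m := hwf.min_le hne ⟨m, rfl⟩
    rw [← hN] at h2
    exact le_antisymm h1 h2

def sumsUpTo (I : Set ℝ) : ℕ → Set ℝ
  | 0 => {0}
  | (K+1) => sumsUpTo I K ∪ (sumsUpTo I K + I)

lemma sumsUpTo_isWF {I : Set ℝ} (h : I.IsWF) : ∀ K, (sumsUpTo I K).IsWF := by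
  intro K
  induction K with
  | zero => exact Set.isWF_singleton
  | succ K ih => exact ih.union (ih.add h)

lemma sumsUpTo_mono (I : Set ℝ) : Monotone (sumsUpTo I) :=
  monotone_nat_of_le_succ fun K => Set.subset_union_left

lemma sum_mem_sumsUpTo (I : Set ℝ) : ∀ (p : ℕ) (i : Fin p → ℝ), (∀ j, i j ∈ I) →
    ∑ j, i j ∈ sumsUpTo I p := by
  intro p
  induction p with
  | zero => intro i _; simp [sumsUpTo]
  | succ p ih =>
      intro i hi
      rw [Fin.sum_univ_castSucc]
      exact Or.inr (Set.add_mem_add (ih _ fun j => hi _) (hi _))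

lemma T1_isWF {I : Set ℝ} (hI : I ⊆ Set.Icc 0 1) (h : I.IsWF) :
    Set.IsWF {s : ℝ | (∃ (p : ℕ) (i : Fin p → ℝ), (∀ j, i j ∈ I) ∧ s = ∑ j, i j) ∧ s ≤ 1} := by
  by_cases hne : (I \ {0}).Nonempty
  · set m := (h.mono Set.diff_subset).min hne with hm
    have hmmem : m ∈ I \ {0} := (h.mono Set.diff_subset).min_mem hne
    have hmpos : 0 < m := lt_of_le_of_ne (hI hmmem.1).1 (Ne.symm hmmem.2)
    set K := ⌈1/m⌉₊ with hK
    refine ((sumsUpTo_isWF h K).mono ?_)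
    rintro s ⟨⟨p, i, hi, rfl⟩, hs1⟩
    set Z := Finset.univ.filter (fun j => i j ≠ 0) with hZ
    have hsum : ∑ j ∈ Z, i j = ∑ j, i j := Finset.sum_filter_ne_zero _
    have hcard : (Z.card : ℝ) * m ≤ ∑ j ∈ Z, i j := by
      rw [← nsmul_eq_mul]
      refine Finset.card_nsmul_le_sum Z i m ?_
      intro j hj
      have : i j ∈ I \ {0} := ⟨hi j, (Finset.mem_filter.mp hj).2⟩
      exact (h.mono Set.diff_subset).min_le hne this
    have hcardK : Z.card ≤ K := by
      have h1 : (Z.card : ℝ) ≤ 1 / m := by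
        rw [le_div_iff₀ hmpos]
        calc (Z.card : ℝ) * m ≤ ∑ j ∈ Z, i j := hcard
        _ = ∑ j, i j := hsum
        _ ≤ 1 := hs1
      have h2 : (1:ℝ)/m ≤ (K : ℝ) := Nat.le_ceil _
      exact_mod_cast h1.trans h2
    refine sumsUpTo_mono I hcardK ?_
    have : ∑ j, i j = ∑ k : Fin Z.card, i (Z.equivFin.symm k) := by
      rw [Equiv.sum_comp Z.equivFin.symm (fun z : Z => i z), Finset.sum_coe_sort, hsum]
    rw [this]
    exact sum_mem_sumsUpTo I _ _ fun k => hi _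
  · have hsub : I ⊆ {0} := by
      intro x hx
      by_contra hx0
      exact hne ⟨x, hx, hx0⟩
    refine (Set.isWF_singleton (a := (0:ℝ))).mono ?_
    rintro s ⟨⟨p, i, hi, rfl⟩, _⟩
    have : ∀ j, i j = 0 := fun j => hsub (hi j)
    simp [this]

lemma derived_isWF {I : Set ℝ} (hI : I ⊆ Set.Icc 0 1) (h : I.IsWF) :
    (paperDerivedSet I ∩ Set.Icc 0 1).IsWF := by
  rw [Set.isWF_iff_no_descending_seq]
  intro f hf hmem
  choose r p hr i hi hfx using fun n => (hmem n).1
  have hfx' : ∀ n : ℕ, f n = ((r n : ℝ) - 1 + ∑ j, i n j) / r n := hfx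
  have hmem' : ∀ n : ℕ, f n ∈ paperDerivedSet I ∩ Set.Icc 0 1 := hmem
  set s : ℕ → ℝ := fun n => ∑ j, i n j with hs
  have hs0 : ∀ n, 0 ≤ s n := fun n => Finset.sum_nonneg fun j _ => (hI (hi n j)).1
  have hrpos : ∀ n, (0:ℝ) < r n := fun n => by exact_mod_cast hr n
  have hs1 : ∀ n, s n ≤ 1 := by
    intro n
    have h1 : f n ≤ 1 := (hmem' n).2.2
    rw [hfx' n, div_le_one (hrpos n)] at h1
    linarith
  have hf1 : f 1 < 1 := lt_of_lt_of_le (hf Nat.zero_lt_one) (hmem' 0).2.2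
  set R : ℕ := ⌈1/(1 - f 1)⌉₊ with hR
  have hrbound : ∀ n, 1 ≤ n → r n ≤ R := by
    intro n hn
    have h1 : ((r n : ℝ) - 1) / r n ≤ f 1 := by
      calc ((r n : ℝ) - 1) / r n ≤ ((r n : ℝ) - 1 + s n) / r n := by
            gcongr
            linarith [hs0 n]
      _ = f n := (hfx' n).symm
      _ ≤ f 1 := hf.antitone hn
    have h2 : (r n : ℝ) * (1 - f 1) ≤ 1 := by
      rw [div_le_iff₀ (hrpos n)] at h1
      nlinarith
    have h3 : (r n : ℝ) ≤ 1 / (1 - f 1) := by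
      rw [le_div_iff₀ (by linarith)]
      linarith
    have h4 : (1:ℝ) / (1 - f 1) ≤ (R : ℝ) := Nat.le_ceil _
    exact_mod_cast h3.trans h4
  set g : ℕ → Fin (R + 1) := fun k => ⟨r (k + 1), Nat.lt_succ_of_le (hrbound (k+1) le_add_self)⟩
    with hg
  obtain ⟨y, hy⟩ := Finite.exists_infinite_fiber g
  have hPinf : {k | g k = y}.Infinite := Set.infinite_coe_iff.mp hy
  set P : ℕ → Prop := fun k => g k = y with hP
  have hnth_mono : StrictMono (Nat.nth P) := Nat.nth_strictMono hPinf
  have hnth_mem : ∀ k, r (Nat.nth P k + 1) = (y : ℕ) := by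
    intro k
    have := Nat.nth_mem_of_infinite hPinf k
    exact congrArg Fin.val this
  have hypos : (0:ℝ) < (y : ℕ) := by
    have := hrpos (Nat.nth P 0 + 1)
    rw [hnth_mem 0] at this
    exact this
  set d : ℕ → ℝ := fun k => ((y:ℕ) : ℝ) * f (Nat.nth P k + 1) - (((y:ℕ) : ℝ) - 1) with hd
  have hdeq : ∀ k, d k = s (Nat.nth P k + 1) := by
    intro k
    have h1 := hfx' (Nat.nth P k + 1)
    rw [hnth_mem k] at h1
    have h2 : ((y:ℕ):ℝ) * f (Nat.nth P k + 1) = ((y:ℕ):ℝ) - 1 + s (Nat.nth P k + 1) := by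
      rw [h1]
      field_simp
      rfl
    rw [hd]; simp only []; linarith
  have hdanti : StrictAnti d := by
    intro a b hab
    have : f (Nat.nth P b + 1) < f (Nat.nth P a + 1) := hf (by
      have := hnth_mono hab; omega)
    have := mul_lt_mul_of_pos_left this hypos
    simp only [hd]
    linarith
  refine Set.isWF_iff_no_descending_seq.mp (T1_isWF hI h) d hdanti fun k => ?_
  exact ⟨⟨_, i _, hi _, hdeq k⟩, le_of_eq_of_le (hdeq k) (hs1 _)⟩

theorem stmt_1 (I : Set ℝ) (hI : I ⊆ Set.Icc 0 1) :
    SatisfiesDCC I ↔ SatisfiesDCC (paperDerivedSet I ∩ Set.Icc 0 1) := by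
  rw [dcc_iff_isWF, dcc_iff_isWF]
  constructor
  · exact derived_isWF hI
  · intro h
    refine h.mono fun x hx => ⟨⟨1, 1, one_pos, fun _ => x, fun _ => hx, by simp⟩, hI hx⟩
end

section
/- Let J = { 1 − 1/n : n a positive integer } ∪ {1}. Then the minimum of the set of positive real numbers of the form 2g − 2 + b_1 + … + b_p, where g and p are nonnegative integers and b_1, …, b_p ∈ J, equals 1/42. That is, every positive number of this form is at least 1/42, and 1/42 = 2·0 − 2 + (1 − 1/2) + (1 − 1/3) + (1 − 1/7) is of this form. (In the notation of the paper, v(1,J) = 1/42 for the standard coefficient set J.) -/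
/-- The standard coefficient set `J = { 1 − 1/n : n ∈ ℕ, n ≥ 1 } ∪ {1}`. -/
def standardSet : Set ℝ :=
  {x | ∃ n : ℕ, 0 < n ∧ x = 1 - 1 / (n : ℝ)} ∪ {1}

lemma std_nonneg {y : ℝ} (hy : y ∈ standardSet) : 0 ≤ y := by
  rcases hy with ⟨n, hn, rfl⟩ | h
  · have h1 : (1:ℝ) ≤ n := by exact_mod_cast hn
    have : 1/(n:ℝ) ≤ 1 := by rw [div_le_one (by linarith)]; linarith
    linarith
  · simp only [Set.mem_singleton_iff] at h; rw [h]; norm_num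

lemma std_le_one {y : ℝ} (hy : y ∈ standardSet) : y ≤ 1 := by
  rcases hy with ⟨n, hn, rfl⟩ | h
  · have h1 : (0:ℝ) < n := by exact_mod_cast hn
    have : 0 < 1/(n:ℝ) := by positivity
    linarith
  · simp only [Set.mem_singleton_iff] at h; rw [h]

lemma jstep (k : ℕ) (hk : 0 < k) {y : ℝ} (hy : y ∈ standardSet)
    (h : 1 - 1/(k:ℝ) < y) : 1 - 1/((k:ℝ)+1) ≤ y := by
  rcases hy with ⟨n, hn, rfl⟩ | hy1
  · have hk0 : (0:ℝ) < k := by exact_mod_cast hk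
    have hn0 : (0:ℝ) < n := by exact_mod_cast hn
    have h1 : 1/(n:ℝ) < 1/(k:ℝ) := by linarith
    have h2 : (k:ℝ) < n := by
      rw [div_lt_div_iff₀ hn0 hk0] at h1; linarith
    have h3 : k < n := by exact_mod_cast h2
    have h4 : (k:ℝ) + 1 ≤ n := by exact_mod_cast h3
    have h5 : 1/(n:ℝ) ≤ 1/((k:ℝ)+1) := by
      apply one_div_le_one_div_of_le (by positivity) h4
    linarith
  · simp only [Set.mem_singleton_iff] at hy1; rw [hy1]
    have : (0:ℝ) < (k:ℝ)+1 := by positivity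
    have : 0 < 1/((k:ℝ)+1) := by positivity
    linarith

lemma std_half {y : ℝ} (hy : y ∈ standardSet) (h : 0 < y) : 1/2 ≤ y := by
  have := jstep 1 one_pos hy (by norm_num; linarith)
  norm_num at this; linarith

lemma std_zero {y : ℝ} (hy : y ∈ standardSet) (h : y < 1/2) : y = 0 := by
  rcases lt_or_ge 0 y with h0 | h0
  · have := std_half hy h0; linarith
  · linarith [std_nonneg hy]

lemma std23 {y : ℝ} (hy : y ∈ standardSet) (h : 1/2 < y) : 2/3 ≤ y := by
  have := jstep 2 (by norm_num) hy (by norm_num; linarith)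
  norm_num at this; linarith

lemma std34 {y : ℝ} (hy : y ∈ standardSet) (h : 2/3 < y) : 3/4 ≤ y := by
  have := jstep 3 (by norm_num) hy (by norm_num; linarith)
  norm_num at this; linarith

lemma std45 {y : ℝ} (hy : y ∈ standardSet) (h : 3/4 < y) : 4/5 ≤ y := by
  have := jstep 4 (by norm_num) hy (by norm_num; linarith)
  norm_num at this; linarith

lemma std67 {y : ℝ} (hy : y ∈ standardSet) (h : 5/6 < y) : 6/7 ≤ y := by
  have := jstep 6 (by norm_num) hy (by norm_num; linarith)
  norm_num at this; linarith

lemma triple_sorted {a b c : ℝ} (ha : a ∈ standardSet) (hb : b ∈ standardSet)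
    (hc : c ∈ standardSet) (hab : a ≤ b) (hbc : b ≤ c)
    (h2 : 2 < a + b + c) : 2 + 1/42 ≤ a + b + c := by
  have ha1 := std_le_one ha
  have hb1 := std_le_one hb
  have hc1 := std_le_one hc
  have ha0 : 0 < a := by linarith
  have ha2 := std_half ha ha0
  rcases lt_or_ge (1/2) a with hA | hA
  · have ha3 := std23 ha hA
    have hc3 : 2/3 < c := by linarith
    have := std34 hc hc3
    linarith
  · have hb0 : 1/2 < b := by linarith
    have hb3 := std23 hb hb0
    rcases lt_or_ge (2/3) b with hB | hB
    · have hb4 := std34 hb hB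
      rcases lt_or_ge (3/4) b with hB2 | hB2
      · have hb5 := std45 hb hB2
        have hc5 : 3/4 < c := by linarith
        have := std45 hc hc5
        linarith
      · have hc4 : 3/4 < c := by linarith
        have := std45 hc hc4
        linarith
    · have hc5 : 5/6 < c := by linarith
      have := std67 hc hc5
      linarith

lemma triple {a b c : ℝ} (ha : a ∈ standardSet) (hb : b ∈ standardSet)
    (hc : c ∈ standardSet) (h2 : 2 < a + b + c) : 2 + 1/42 ≤ a + b + c := by
  rcases le_total a b with h1 | h1 <;> rcases le_total b c with h3 | h3 <;>
    rcases le_total a c with h4 | h4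
  · linarith [triple_sorted ha hb hc h1 h3 (by linarith)]
  · linarith [triple_sorted ha hb hc h1 h3 (by linarith)]
  · linarith [triple_sorted ha hc hb h4 h3 (by linarith)]
  · linarith [triple_sorted hc ha hb h4 h1 (by linarith)]
  · linarith [triple_sorted hb ha hc h1 h4 (by linarith)]
  · linarith [triple_sorted hb hc ha h3 h4 (by linarith)]
  · linarith [triple_sorted hc hb ha h3 h1 (by linarith)]
  · linarith [triple_sorted hc hb ha h3 h1 (by linarith)]

lemma sum_lb {p : ℕ} (b : Fin p → ℝ) (hb : ∀ j, b j ∈ standardSet)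
    (h2 : 2 < ∑ j, b j) : 2 + 1/42 ≤ ∑ j, b j := by
  by_contra hlt
  push_neg at hlt
  set S := ∑ j, b j with hS
  classical
  set T : Finset (Fin p) := Finset.univ.filter (fun j => 1/2 ≤ b j) with hT
  have hTmem : ∀ j ∈ T, 1/2 ≤ b j := by
    intro j hj; exact (Finset.mem_filter.mp hj).2
  have hTsum : ∑ j ∈ T, b j = S := by
    rw [hS, ← Finset.sum_filter_add_sum_filter_not Finset.univ (fun j => 1/2 ≤ b j) b]
    have h0 : ∑ j ∈ Finset.univ.filter (fun j => ¬ (1/2 ≤ b j)), b j = 0 := by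
      apply Finset.sum_eq_zero
      intro j hj
      have := (Finset.mem_filter.mp hj).2
      exact std_zero (hb j) (by linarith)
    rw [h0]; rw [add_zero]
  have hhalf : (T.card : ℝ) * (1/2) ≤ S := by
    rw [← hTsum]
    calc (T.card : ℝ) * (1/2) = ∑ _j ∈ T, (1/2 : ℝ) := by
          rw [Finset.sum_const, nsmul_eq_mul]
      _ ≤ ∑ j ∈ T, b j := Finset.sum_le_sum hTmem
  have hone : S ≤ (T.card : ℝ) := by
    rw [← hTsum]
    calc ∑ j ∈ T, b j ≤ ∑ _j ∈ T, (1:ℝ) :=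
          Finset.sum_le_sum (fun j _ => std_le_one (hb j))
      _ = (T.card : ℝ) := by rw [Finset.sum_const, nsmul_eq_mul, mul_one]
  have hc5 : T.card < 5 := by
    by_contra hc
    push_neg at hc
    have : (5:ℝ) ≤ T.card := by exact_mod_cast hc
    linarith
  have hc3 : 3 ≤ T.card := by
    by_contra hc
    push_neg at hc
    have : (T.card : ℝ) ≤ 2 := by exact_mod_cast Nat.lt_succ_iff.mp hc
    linarith
  have hcases : T.card = 3 ∨ T.card = 4 := by omega
  rcases hcases with hcard | hcard
  · obtain ⟨i, j, k, hij, hik, hjk, hTeq⟩ := Finset.card_eq_three.mp hcard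
    have hsum3 : b i + b j + b k = S := by
      rw [← hTsum, hTeq]
      rw [Finset.sum_insert (by simp [hij, hik]), Finset.sum_insert (by simp [hjk]),
        Finset.sum_singleton]
      ring
    have hiT : i ∈ T := by rw [hTeq]; simp
    have := triple (hb i) (hb j) (hb k) (by linarith)
    linarith
  · have hall : ∀ j ∈ T, b j = 1/2 := by
      intro j hj
      by_contra hne
      have hgt : 1/2 < b j := lt_of_le_of_ne (hTmem j hj) (Ne.symm hne)
      have h23 := std23 (hb j) hgt
      have herase : ∑ i ∈ T.erase j, b i + b j = ∑ i ∈ T, b i :=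
        Finset.sum_erase_add T b hj
      have hcerase : (T.erase j).card = 3 := by
        rw [Finset.card_erase_of_mem hj, hcard]
      have hlbe : (3:ℝ) * (1/2) ≤ ∑ i ∈ T.erase j, b i := by
        calc (3:ℝ) * (1/2) = ∑ _i ∈ T.erase j, (1/2 : ℝ) := by
              rw [Finset.sum_const, hcerase, nsmul_eq_mul]; norm_num
          _ ≤ ∑ i ∈ T.erase j, b i :=
              Finset.sum_le_sum (fun i hi => hTmem i (Finset.mem_of_mem_erase hi))
      rw [hTsum] at herase
      linarith
    have : S = 2 := by
      rw [← hTsum, Finset.sum_congr rfl hall, Finset.sum_const, hcard, nsmul_eq_mul]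
      norm_num
    linarith

theorem stmt_3 :
    IsLeast {x : ℝ | 0 < x ∧ ∃ (g p : ℕ) (b : Fin p → ℝ),
      (∀ j, b j ∈ standardSet) ∧ x = 2 * (g : ℝ) - 2 + ∑ j, b j} (1 / 42) := by
  constructor
  · refine ⟨by norm_num, 0, 3, ![1/2, 2/3, 6/7], ?_, ?_⟩
    · intro j
      fin_cases j
      · exact Or.inl ⟨2, by norm_num, by norm_num⟩
      · exact Or.inl ⟨3, by norm_num, by norm_num⟩
      · exact Or.inl ⟨7, by norm_num, by norm_num⟩
    · rw [Fin.sum_univ_three]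
      norm_num [Matrix.cons_val_two]
  · rintro x ⟨hx, g, p, b, hb, rfl⟩
    have hnn : ∀ j, (0:ℝ) ≤ b j := fun j => std_nonneg (hb j)
    have hS0 : (0:ℝ) ≤ ∑ j, b j := Finset.sum_nonneg (fun j _ => hnn j)
    match g with
    | 0 =>
      have h2 : 2 < ∑ j, b j := by push_cast at hx ⊢; linarith
      have := sum_lb b hb h2
      push_cast
      linarith
    | 1 =>
      have hpos : 0 < ∑ j, b j := by push_cast at hx; linarith
      obtain ⟨j, hj⟩ : ∃ j, 0 < b j := by
        by_contra h
        push_neg at h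
        have : ∑ j, b j ≤ 0 := Finset.sum_nonpos (fun j _ => h j)
        linarith
      have h12 := std_half (hb j) hj
      have hle : b j ≤ ∑ i, b i :=
        Finset.single_le_sum (fun i _ => hnn i) (Finset.mem_univ j)
      push_cast
      linarith
    | (n+2) =>
      have h0 : (0:ℝ) ≤ (n:ℝ) := Nat.cast_nonneg n
      have : (2:ℝ) ≤ (n:ℝ) + 2 := by linarith
      push_cast
      linarith
end

section
/- Let D ⊆ (0, ∞) be a set of positive real numbers satisfying the DCC and let d > 0 be a real number. Then there are only finitely many finite multisets {d_1, …, d_k} of elements of D (k a nonnegative integer, repetitions allowed) such that d_1 + … + d_k = d. -/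
private lemma forall₂_eq_of_sum_le {l₁ l₂ : List ℝ} (h : List.Forall₂ (· ≤ ·) l₁ l₂)
    (hs : l₂.sum ≤ l₁.sum) : l₁ = l₂ := by
  induction h with
  | nil => rfl
  | @cons a b l₁ l₂ hab htail ih =>
    simp only [List.sum_cons] at hs
    have hle : l₁.sum ≤ l₂.sum := List.Forall₂.sum_le_sum htail
    have hba : b ≤ a := by linarith
    have hab' : a = b := le_antisymm hab hba
    have : l₂.sum ≤ l₁.sum := by linarith [hab'] -- from hs and a = b
    rw [hab', ih (by linarith)]

private lemma sublist_eq_of_sum_le {l₁ l₂ : List ℝ} (h : List.Sublist l₁ l₂)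
    (hpos : ∀ x ∈ l₂, 0 < x) (hs : l₂.sum ≤ l₁.sum) : l₁ = l₂ := by
  induction h with
  | slnil => rfl
  | @cons l₁ l₂ a h ih =>
    exfalso
    have h1 : l₁.sum ≤ l₂.sum :=
      List.Sublist.sum_le_sum h (fun x hx => (hpos x (List.mem_cons_of_mem a hx)).le)
    have h2 : 0 < a := hpos a (List.mem_cons_self (a := a) (l := l₂))
    simp only [List.sum_cons] at hs
    linarith
  | @cons_cons l₁ l₂ a h ih =>
    simp only [List.sum_cons] at hs
    have hpos' : ∀ x ∈ l₂, (0:ℝ) < x := fun x hx => hpos x (List.mem_cons_of_mem a hx)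
    rw [ih hpos' (by linarith)]

private lemma sublistForall₂_eq_of_sum_le {l₁ l₂ : List ℝ}
    (h : List.SublistForall₂ (· ≤ ·) l₁ l₂) (hpos : ∀ x ∈ l₂, 0 < x)
    (hs : l₂.sum ≤ l₁.sum) : l₁ = l₂ := by
  obtain ⟨l', hall, hsub⟩ := List.sublistForall₂_iff.1 h
  have h1 : l'.sum ≤ l₂.sum :=
    List.Sublist.sum_le_sum hsub (fun x hx => (hpos x hx).le)
  have h2 : l₁.sum ≤ l'.sum := List.Forall₂.sum_le_sum hall
  have e1 : l₁ = l' := forall₂_eq_of_sum_le hall (by linarith)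
  have e2 : l' = l₂ := sublist_eq_of_sum_le hsub hpos (by linarith)
  rw [e1, e2]

theorem stmt_6 (D : Set ℝ) (hD : D ⊆ Set.Ioi 0) (hDdcc : SatisfiesDCC D)
    (d : ℝ) (hd : 0 < d) :
    Set.Finite {s : Multiset ℝ | (∀ x ∈ s, x ∈ D) ∧ s.sum = d} := by
  by_contra hfin
  have hInf : {s : Multiset ℝ | (∀ x ∈ s, x ∈ D) ∧ s.sum = d}.Infinite := hfin
  -- D is well-founded under <
  have hWF : D.IsWF := by
    rw [Set.isWF_iff_no_descending_seq]
    intro f hf hmem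
    obtain ⟨N, hN⟩ := hDdcc f hmem hf.antitone
    have := hN (N + 1) (Nat.le_succ N)
    exact absurd this (hf (Nat.lt_succ_self N)).ne
  have hPWO : D.IsPWO := hWF.isPWO
  have hHig := hPWO.partiallyWellOrderedOn_sublistForall₂ (· ≤ ·)
  -- an injective sequence of multisets in the set
  let e := hInf.natEmbedding
  set g : ℕ → List ℝ := fun n => ((e n : Multiset ℝ)).toList with hg
  have hmem : ∀ n, g n ∈ { l : List ℝ | ∀ x, x ∈ l → x ∈ D } := by
    intro n x hx
    exact (e n).2.1 x (by rwa [← Multiset.mem_toList])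
  obtain ⟨m, n, hmn, hrel⟩ := hHig (fun k => ⟨g k, hmem k⟩)
  have hsum : ∀ k, (g k).sum = d := by
    intro k
    have := (e k).2.2
    rwa [hg, Multiset.sum_toList]
  have hpos : ∀ x ∈ g n, (0:ℝ) < x := fun x hx => hD (hmem n x hx)
  have heq : g m = g n := sublistForall₂_eq_of_sum_le hrel hpos
    (by rw [hsum m, hsum n])
  have : (e m : Multiset ℝ) = (e n : Multiset ℝ) := by
    rw [← Multiset.coe_toList (e m : Multiset ℝ), ← Multiset.coe_toList (e n : Multiset ℝ)]
    exact congrArg _ heq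
  have : e m = e n := Subtype.ext this
  exact absurd (e.injective this) hmn.ne
end

section
/- Let J = { 1 − 1/n : n a positive integer } ∪ {1} be the standard coefficient set. Then D(J) ∩ [0,1] = J; that is, every number of the form (r − 1 + b_1 + … + b_p)/r with r a positive integer and b_1, …, b_p ∈ J which lies in the interval [0,1] again belongs to J, and conversely every element of J is of this form. (This expresses that the standard coefficient set is closed under taking the different.) -/
theorem stmt_7 : paperDerivedSet standardSet ∩ Set.Icc 0 1 = standardSet := by
  ext x
  constructor
  · rintro ⟨⟨r, p, hr, i, hi, hx⟩, hx0, hx1⟩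
    have hrpos : (0:ℝ) < r := by exact_mod_cast hr
    have hi0 : ∀ j, 0 ≤ i j := by
      intro j
      rcases hi j with ⟨n, hn, he⟩ | he
      · rw [he]
        have h1 : (1:ℝ) ≤ n := by exact_mod_cast hn
        have : 1 / (n:ℝ) ≤ 1 := by
          rw [div_le_one (by linarith)]; linarith
        linarith
      · simp only [Set.mem_singleton_iff] at he; rw [he]; norm_num
    have hsum1 : ∑ j, i j ≤ 1 := by
      rw [hx, div_le_one hrpos] at hx1
      linarith
    by_cases hs : ∑ j, i j = 1
    · right
      simp only [Set.mem_singleton_iff]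
      rw [hx, hs]
      field_simp
      ring
    · have hslt : ∑ j, i j < 1 := lt_of_le_of_ne hsum1 hs
      have hn : ∀ j, ∃ n : ℕ, 0 < n ∧ i j = 1 - 1 / (n : ℝ) := by
        intro j
        rcases hi j with h | h
        · exact h
        · exfalso
          simp only [Set.mem_singleton_iff] at h
          have hle : i j ≤ ∑ k, i k :=
            Finset.single_le_sum (fun k _ => hi0 k) (Finset.mem_univ j)
          rw [h] at hle
          linarith
      choose n hnpos hni using hn
      set S := Finset.univ.filter (fun j => 2 ≤ n j) with hS
      have hsumS : ∑ j, i j = ∑ j ∈ S, i j := by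
        rw [← Finset.sum_filter_add_sum_filter_not Finset.univ (fun j => 2 ≤ n j) i]
        have hz : ∑ j ∈ Finset.univ.filter (fun j => ¬ 2 ≤ n j), i j = 0 := by
          apply Finset.sum_eq_zero
          intro j hj
          simp only [Finset.mem_filter] at hj
          have h1 : n j = 1 := by have := hnpos j; omega
          rw [hni j, h1]
          norm_num
        rw [hz, add_zero]
      have hhalf : ∀ j ∈ S, (1:ℝ)/2 ≤ i j := by
        intro j hj
        simp only [hS, Finset.mem_filter] at hj
        have h2 : (2:ℝ) ≤ n j := by exact_mod_cast hj.2
        rw [hni j]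
        have : 1 / (n j : ℝ) ≤ 1/2 := by
          apply one_div_le_one_div_of_le <;> linarith
        linarith
      have hcard : S.card ≤ 1 := by
        by_contra h
        push_neg at h
        have h2 : (2:ℝ) ≤ S.card := by exact_mod_cast h
        have hge : (S.card : ℝ) * (1/2) ≤ ∑ j ∈ S, i j := by
          calc (S.card : ℝ) * (1/2) = ∑ _j ∈ S, (1:ℝ)/2 := by
                rw [Finset.sum_const, nsmul_eq_mul]
            _ ≤ ∑ j ∈ S, i j := Finset.sum_le_sum hhalf
        nlinarith [hsumS]
      rcases Nat.le_one_iff_eq_zero_or_eq_one.mp hcard with h0 | h1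
      · -- S empty : sum = 0, x = 1 - 1/r
        have hSe : S = ∅ := Finset.card_eq_zero.mp h0
        have hsum0 : ∑ j, i j = 0 := by rw [hsumS, hSe, Finset.sum_empty]
        left
        refine ⟨r, hr, ?_⟩
        rw [hx, hsum0]
        field_simp
        ring
      · obtain ⟨j0, hj0⟩ := Finset.card_eq_one.mp h1
        have hsum0 : ∑ j, i j = 1 - 1 / (n j0 : ℝ) := by
          rw [hsumS, hj0, Finset.sum_singleton, hni j0]
        left
        refine ⟨n j0 * r, Nat.mul_pos (hnpos j0) hr, ?_⟩
        have hn0 : (0:ℝ) < n j0 := by exact_mod_cast hnpos j0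
        rw [hx, hsum0]
        push_cast
        field_simp
        ring
  · intro hx
    refine ⟨?_, ?_⟩
    · rcases hx with ⟨m, hm, he⟩ | he
      · refine ⟨m, 0, hm, Fin.elim0, fun j => j.elim0, ?_⟩
        have hm' : (0:ℝ) < m := by exact_mod_cast hm
        rw [he]
        simp
        field_simp
      · simp only [Set.mem_singleton_iff] at he
        refine ⟨1, 1, one_pos, fun _ => 1, fun j => Or.inr rfl, ?_⟩
        rw [he]; norm_num
    · rcases hx with ⟨m, hm, he⟩ | he
      · have hm' : (1:ℝ) ≤ m := by exact_mod_cast hm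
        have h1 : 1 / (m:ℝ) ≤ 1 := by rw [div_le_one (by linarith)]; linarith
        have h2 : 0 < 1 / (m:ℝ) := by positivity
        rw [he]
        constructor <;> linarith
      · simp only [Set.mem_singleton_iff] at he
        rw [he]; exact ⟨zero_le_one, le_refl 1⟩
end
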